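/- Let n be a positive integer, m ∈ {0,...,n-1}, and let s_m be the reflection v ↦ (2m−v) mod n on {0,...,n-1}. Then the quotient graph Γ_n/s_m is a path with ⌊n/2⌋ + 1 vertices if n is even, and a path with (n+1)/2 vertices together with a loop attached to one end vertex if n is odd. -/
import Mathlib


/-- The quotient of the cycle `Γ_n` by the reflection `s_m : v ↦ 2m - v`:
the orbits are `{m - i, m + i}` for `0 ≤ i ≤ ⌊n/2⌋`, and two orbits are adjacent
in the quotient iff their indices differ by one, or (when `n` is odd) they are
both the end orbit `i = ⌊n/2⌋`, which carries a loop.  Hence the quotient is a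
path on `⌊n/2⌋ + 1` vertices, with a loop at one end vertex when `n` is odd. -/
theorem orbital_stmt4 (n m : ℕ) (hn : 0 < n) (hm : m < n) (i j : ℕ)
    (hi : i ≤ n / 2) (hj : j ≤ n / 2) :
    (∃ v w : ZMod n, (w = v + 1 ∨ w = v - 1) ∧
        (v = (m : ZMod n) - (i : ZMod n) ∨ v = (m : ZMod n) + (i : ZMod n)) ∧
        (w = (m : ZMod n) - (j : ZMod n) ∨ w = (m : ZMod n) + (j : ZMod n))) ↔
      (j = i + 1 ∨ i = j + 1 ∨ (¬ Even n ∧ i = j ∧ i = n / 2)) := by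
  haveI : NeZero n := ⟨hn.ne'⟩
  rcases Nat.lt_or_ge n 3 with h3 | h3
  · interval_cases n <;> interval_cases m <;> interval_cases i <;> interval_cases j <;> decide
  constructor
  · rintro ⟨v, w, h, (rfl | rfl), (hw | hw)⟩ <;> subst hw <;> rcases h with h | h <;>
    · have key : (n:ℤ) ∣ ((i:ℤ) - j - 1) ∨ (n:ℤ) ∣ ((i:ℤ) - j + 1) ∨
          (n:ℤ) ∣ ((i:ℤ) + j - 1) ∨ (n:ℤ) ∣ ((i:ℤ) + j + 1) := by
        first
          | exact Or.inl ((ZMod.intCast_zmod_eq_zero_iff_dvd _ n).mp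
              (by push_cast; linear_combination h))
          | exact Or.inl ((ZMod.intCast_zmod_eq_zero_iff_dvd _ n).mp
              (by push_cast; linear_combination -h))
          | exact Or.inr (Or.inl ((ZMod.intCast_zmod_eq_zero_iff_dvd _ n).mp
              (by push_cast; linear_combination h)))
          | exact Or.inr (Or.inl ((ZMod.intCast_zmod_eq_zero_iff_dvd _ n).mp
              (by push_cast; linear_combination -h)))
          | exact Or.inr (Or.inr (Or.inl ((ZMod.intCast_zmod_eq_zero_iff_dvd _ n).mp
              (by push_cast; linear_combination h))))
          | exact Or.inr (Or.inr (Or.inl ((ZMod.intCast_zmod_eq_zero_iff_dvd _ n).mp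
              (by push_cast; linear_combination -h))))
          | exact Or.inr (Or.inr (Or.inr ((ZMod.intCast_zmod_eq_zero_iff_dvd _ n).mp
              (by push_cast; linear_combination h))))
          | exact Or.inr (Or.inr (Or.inr ((ZMod.intCast_zmod_eq_zero_iff_dvd _ n).mp
              (by push_cast; linear_combination -h))))
      clear h
      simp only [Nat.even_iff]
      rcases key with d | d | d | d
      · have := Int.eq_zero_of_abs_lt_dvd d (by rw [abs_lt]; constructor <;> push_cast <;> omega)
        omega
      · have := Int.eq_zero_of_abs_lt_dvd d (by rw [abs_lt]; constructor <;> push_cast <;> omega)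
        omega
      · have := Int.eq_zero_of_abs_lt_dvd d (by rw [abs_lt]; constructor <;> push_cast <;> omega)
        omega
      · have d2 : (n:ℤ) ∣ ((i:ℤ) + j + 1 - n) := dvd_sub d (dvd_refl _)
        have := Int.eq_zero_of_abs_lt_dvd d2 (by rw [abs_lt]; constructor <;> push_cast <;> omega)
        omega
  · rintro (rfl | rfl | ⟨hodd, rfl, h2⟩)
    · exact ⟨m + i, m + i + 1, Or.inl rfl, Or.inr rfl, Or.inr (by push_cast; ring)⟩
    · exact ⟨m + j + 1, m + j, Or.inr (by ring), Or.inr (by push_cast; ring), Or.inr rfl⟩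
    · have hn2 : 2 * i + 1 = n := by rw [Nat.even_iff] at hodd; omega
      have hz : ((2 * i + 1 : ℕ) : ZMod n) = 0 := by rw [hn2]; exact ZMod.natCast_self n
      push_cast at hz
      exact ⟨m - i, m + i, Or.inr (by linear_combination hz), Or.inl rfl, Or.inr rfl⟩
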